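/- Let q ≥ 1, let μ₁, μ₂ ∈ ℝ^q, and let Σ₁ = diag(S²_{1,1}, …, S²_{1,q}) and Σ₂ = diag(S²_{2,1}, …, S²_{2,q}) be diagonal covariance matrices with 0 < S²_{1,z} < S²_{2,z} for every z ∈ {1,…,q}. Then for every x ∈ ℝ^q, Φ(x | μ₁, Σ₁) / Φ(x | μ₂, Σ₂) ≤ (∏_{z=1}^q S_{2,z}/S_{1,z}) · exp( (1/2) Σ_{z=1}^q (μ_{1,z} − μ_{2,z})² / (S²_{2,z} − S²_{1,z}) ). -/

import Mathlib

open Real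

/-- Gaussian density on `ℝ^q` with mean `μ` and diagonal covariance matrix whose
diagonal entries (variances) are given by `v`. -/
noncomputable def gaussDensity {q : ℕ} (μ v : Fin q → ℝ) (x : Fin q → ℝ) : ℝ :=
  (2 * Real.pi) ^ (-(q : ℝ) / 2) * (∏ z, v z) ^ (-(1 : ℝ) / 2) *
    Real.exp (-(1 / 2) * ∑ z, (x z - μ z) ^ 2 / v z)

lemma key_ineq (a b s d : ℝ) (ha : 0 < a) (hab : a < b) :
    (s + d) ^ 2 / b - s ^ 2 / a ≤ d ^ 2 / (b - a) := by
  have hb : 0 < b := ha.trans hab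
  have hba : 0 < b - a := sub_pos.2 hab
  rw [div_sub_div _ _ hb.ne' ha.ne', div_le_div_iff₀ (by positivity) hba]
  nlinarith [sq_nonneg ((b - a) * s - a * d)]

lemma rpow_neg_half_prod {q : ℕ} (v : Fin q → ℝ) (hv : ∀ z, 0 < v z) :
    (∏ z, v z) ^ (-(1 : ℝ) / 2) = (∏ z, Real.sqrt (v z))⁻¹ := by
  have hp : (0 : ℝ) < ∏ z, v z := Finset.prod_pos fun z _ => hv z
  have h1 : ∏ z, v z = (∏ z, Real.sqrt (v z)) ^ 2 := by
    rw [← Finset.prod_pow]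
    exact Finset.prod_congr rfl fun z _ => (Real.sq_sqrt (hv z).le).symm
  rw [show (-(1 : ℝ) / 2) = -(1 / 2) by ring, Real.rpow_neg hp.le, ← Real.sqrt_eq_rpow, h1,
    Real.sqrt_sq (Finset.prod_nonneg fun z _ => Real.sqrt_nonneg _)]

/-- Ratio bound for two Gaussian densities with diagonal covariances
`Σ₁ = diag(v₁)`, `Σ₂ = diag(v₂)` with `0 < v₁ z < v₂ z` for all `z`:
`Φ(x|μ₁,Σ₁)/Φ(x|μ₂,Σ₂) ≤ (∏ √(v₂ z)/√(v₁ z)) · exp(½ Σ (μ₁ z − μ₂ z)²/(v₂ z − v₁ z))`. -/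
theorem stmt_5 (q : ℕ) (hq : 1 ≤ q) (μ₁ μ₂ v₁ v₂ : Fin q → ℝ)
    (h₁ : ∀ z, 0 < v₁ z) (h₁₂ : ∀ z, v₁ z < v₂ z) (x : Fin q → ℝ) :
    gaussDensity μ₁ v₁ x / gaussDensity μ₂ v₂ x ≤
      (∏ z, Real.sqrt (v₂ z) / Real.sqrt (v₁ z)) *
        Real.exp ((1 / 2) * ∑ z, (μ₁ z - μ₂ z) ^ 2 / (v₂ z - v₁ z)) := by
  have hv2 : ∀ z, 0 < v₂ z := fun z => (h₁ z).trans (h₁₂ z)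
  have hP2 : (0 : ℝ) < ∏ z, v₂ z := Finset.prod_pos fun z _ => hv2 z
  have hden : 0 < gaussDensity μ₂ v₂ x := by
    unfold gaussDensity
    have := Real.pi_pos
    positivity
  rw [div_le_iff₀ hden]
  unfold gaussDensity
  rw [rpow_neg_half_prod v₁ h₁, rpow_neg_half_prod v₂ hv2]
  have hPeq : (∏ z, Real.sqrt (v₂ z) / Real.sqrt (v₁ z)) * (∏ z, Real.sqrt (v₂ z))⁻¹
      = (∏ z, Real.sqrt (v₁ z))⁻¹ := by
    rw [← Finset.prod_inv_distrib, ← Finset.prod_mul_distrib, ← Finset.prod_inv_distrib]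
    refine Finset.prod_congr rfl fun z _ => ?_
    have h2 : Real.sqrt (v₂ z) ≠ 0 := (Real.sqrt_pos.2 (hv2 z)).ne'
    field_simp
  have hR : (∏ z, Real.sqrt (v₂ z) / Real.sqrt (v₁ z)) *
        Real.exp ((1 / 2) * ∑ z, (μ₁ z - μ₂ z) ^ 2 / (v₂ z - v₁ z)) *
        ((2 * Real.pi) ^ (-(q : ℝ) / 2) * (∏ z, Real.sqrt (v₂ z))⁻¹ *
          Real.exp (-(1 / 2) * ∑ z, (x z - μ₂ z) ^ 2 / v₂ z))
      = (2 * Real.pi) ^ (-(q : ℝ) / 2) * (∏ z, Real.sqrt (v₁ z))⁻¹ *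
        Real.exp ((1 / 2) * (∑ z, (μ₁ z - μ₂ z) ^ 2 / (v₂ z - v₁ z)) +
          -(1 / 2) * ∑ z, (x z - μ₂ z) ^ 2 / v₂ z) := by
    rw [← hPeq, Real.exp_add]; ring
  rw [hR]
  have hsum : (∑ z, (x z - μ₂ z) ^ 2 / v₂ z) - (∑ z, (x z - μ₁ z) ^ 2 / v₁ z)
      ≤ ∑ z, (μ₁ z - μ₂ z) ^ 2 / (v₂ z - v₁ z) := by
    rw [← Finset.sum_sub_distrib]
    refine Finset.sum_le_sum fun z _ => ?_
    have h := key_ineq (v₁ z) (v₂ z) (x z - μ₁ z) (μ₁ z - μ₂ z) (h₁ z) (h₁₂ z)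
    have he : x z - μ₂ z = (x z - μ₁ z) + (μ₁ z - μ₂ z) := by ring
    rw [he]; exact h
  have hexp : Real.exp (-(1 / 2) * ∑ z, (x z - μ₁ z) ^ 2 / v₁ z)
      ≤ Real.exp ((1 / 2) * (∑ z, (μ₁ z - μ₂ z) ^ 2 / (v₂ z - v₁ z)) +
          -(1 / 2) * ∑ z, (x z - μ₂ z) ^ 2 / v₂ z) := by
    apply Real.exp_le_exp.2
    linarith
  have hpos : (0 : ℝ) ≤ (2 * Real.pi) ^ (-(q : ℝ) / 2) * (∏ z, Real.sqrt (v₁ z))⁻¹ := by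
    have := Real.pi_pos
    positivity
  calc (2 * Real.pi) ^ (-(q : ℝ) / 2) * (∏ z, Real.sqrt (v₁ z))⁻¹ *
        Real.exp (-(1 / 2) * ∑ z, (x z - μ₁ z) ^ 2 / v₁ z)
      ≤ (2 * Real.pi) ^ (-(q : ℝ) / 2) * (∏ z, Real.sqrt (v₁ z))⁻¹ *
        Real.exp ((1 / 2) * (∑ z, (μ₁ z - μ₂ z) ^ 2 / (v₂ z - v₁ z)) +
          -(1 / 2) * ∑ z, (x z - μ₂ z) ^ 2 / v₂ z) :=
        mul_le_mul_of_nonneg_left hexp hpos
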